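/- The set 𝒟⁻ of pseudo-differential operators over a commutative differential ring (𝒜, D), with componentwise addition and with multiplication determined by (f D^i)·(g D^j) = Σ_{r≥0} binom(i,r) f D^r(g) D^{i+j−r}, is an associative unital (noncommutative) ring with unit 1 = 1·D⁰; moreover the element D = 1·D¹ is invertible in 𝒟⁻, with inverse D^{−1} = 1·D^{−1}. -/

import Mathlib

/-!
Pseudo-differential operators of the first type `𝒟⁻` over a commutative
differential ring `(𝒜, D)`.  An operator `A = Σ_{i ∈ ℤ} f_i D^i` (with
`f_i = 0` for all sufficiently large `i`) is encoded by its coefficient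
function `f : ℤ → 𝒜`.  Multiplication is determined by
`(f D^i)·(g D^j) = Σ_{r ≥ 0} binom(i,r) f D^r(g) D^{i+j-r}`.
-/

namespace TwoBKP

/-- The generalized binomial coefficient `binom(i,r) = i(i−1)⋯(i−r+1)/r! ∈ ℤ`
for an integer upper index `i` and `r : ℕ`. -/
noncomputable def zchoose (i : ℤ) (r : ℕ) : ℤ := Ring.choose i r

variable {A : Type*} [CommRing A]

/-- `f : ℤ → 𝒜` represents an element of `𝒟⁻` iff its support is bounded above. -/
def IsPDO (f : ℤ → A) : Prop := ∃ N : ℤ, ∀ i : ℤ, N < i → f i = 0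

/-- The product in `𝒟⁻`, coefficientwise: the coefficient of `D^n` in `A·B` is
`Σ_{i+j-r=n, r≥0} binom(i,r) f_i D^r(g_j)`. -/
noncomputable def pmul (D : A → A) (f g : ℤ → A) : ℤ → A := fun n =>
  ∑ᶠ p : ℤ × ℤ,
    if 0 ≤ p.1 + p.2 - n then
      zchoose p.1 (p.1 + p.2 - n).toNat • (f p.1 * D^[(p.1 + p.2 - n).toNat] (g p.2))
    else 0

/-- The unit `1 = 1·D⁰` of `𝒟⁻`. -/
def pone : ℤ → A := fun n => if n = 0 then (1 : A) else 0

/-- The monomial `D^k` (in particular `pD 1 = D` and `pD (-1) = D⁻¹`). -/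
def pD (k : ℤ) : ℤ → A := fun n => if n = k then (1 : A) else 0

/-- The multiplication operator `a·D⁰` attached to `a ∈ 𝒜`. -/
def sc (a : A) : ℤ → A := fun n => if n = 0 then a else 0

/-- The nonnegative (differential-operator) part `A₊ = Σ_{i≥0} f_i D^i`. -/
def posPart (f : ℤ → A) : ℤ → A := fun n => if 0 ≤ n then f n else 0

/-- The negative part `A₋ = Σ_{i<0} f_i D^i`. -/
def negPart (f : ℤ → A) : ℤ → A := fun n => if n < 0 then f n else 0

/-- The residue `res A = f_{-1}`. -/
def res (f : ℤ → A) : A := f (-1)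

/-- The adjoint `A* = Σ_i (−D)^i ∘ f_i` computed in `𝒟⁻`, coefficientwise:
the coefficient of `D^n` in `A*` is `Σ_{i ≥ n} (−1)^i binom(i, i−n) D^{i−n}(f_i)`. -/
noncomputable def adj (D : A → A) (f : ℤ → A) : ℤ → A := fun n =>
  ∑ᶠ i : ℤ,
    if 0 ≤ i - n then
      ((-1 : ℤ) ^ i.natAbs * zchoose i (i - n).toNat) • D^[(i - n).toNat] (f i)
    else 0

/-- Powers in `𝒟⁻`. -/
noncomputable def ppow (D : A → A) (f : ℤ → A) : ℕ → ℤ → A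
  | 0 => pone
  | k + 1 => pmul D f (ppow D f k)

/-- The action of a differential operator `Σ_{i≥0} f_i D^i` on an element of `𝒜`. -/
noncomputable def papply (D : A → A) (f : ℤ → A) (a : A) : A :=
  ∑ᶠ i : ℤ, if 0 ≤ i then f i * D^[i.toNat] a else 0

/-- Conjugation by `D`:  `A ↦ D·A·D⁻¹`. -/
noncomputable def conjD (D : A → A) (f : ℤ → A) : ℤ → A :=
  pmul D (pD 1) (pmul D f (pD (-1)))

end TwoBKP
namespace TwoBKP

open Finset

variable {A : Type*} [CommRing A] (D : Derivation ℤ A A)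

/-! ### Iterates of the derivation -/

lemma itD_coe (r : ℕ) : (⇑D)^[r] = ⇑(D.toLinearMap ^ r) := by
  funext a
  rw [Module.End.pow_apply]
  rfl

lemma itD_zero (r : ℕ) : (⇑D)^[r] (0:A) = 0 := by rw [itD_coe]; exact map_zero _

lemma itD_add (r : ℕ) (a b : A) : (⇑D)^[r] (a + b) = (⇑D)^[r] a + (⇑D)^[r] b := by
  rw [itD_coe]; exact map_add _ _ _

lemma itD_zsmul (r : ℕ) (c : ℤ) (a : A) : (⇑D)^[r] (c • a) = c • (⇑D)^[r] a := by
  rw [itD_coe]; exact map_zsmul _ _ _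

lemma itD_sum {ι : Type*} (r : ℕ) (s : Finset ι) (F : ι → A) :
    (⇑D)^[r] (∑ x ∈ s, F x) = ∑ x ∈ s, (⇑D)^[r] (F x) := by
  rw [itD_coe]; exact map_sum _ _ _

lemma itD_one (r : ℕ) (h : r ≠ 0) : (⇑D)^[r] (1:A) = 0 := by
  obtain ⟨t, rfl⟩ := Nat.exists_eq_succ_of_ne_zero h
  rw [Function.iterate_succ_apply, Derivation.map_one_eq_zero, itD_zero]

lemma itD_leibniz (t : ℕ) (a b : A) :
    (⇑D)^[t] (a * b) = ∑ v ∈ range (t+1), ((t.choose v : ℤ)) • ((⇑D)^[v] a * (⇑D)^[t-v] b) := by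
  induction t with
  | zero => simp
  | succ t ih =>
    rw [Function.iterate_succ_apply', ih, map_sum]
    have step : ∀ v ∈ range (t+1), D (((t.choose v : ℤ)) • ((⇑D)^[v] a * (⇑D)^[t-v] b)) =
        ((t.choose v : ℤ)) • ((⇑D)^[v] a * (⇑D)^[t+1-v] b)
          + ((t.choose v : ℤ)) • ((⇑D)^[v+1] a * (⇑D)^[t-v] b) := by
      intro v hv
      have hv' : v ≤ t := Nat.lt_succ_iff.mp (mem_range.mp hv)
      rw [map_zsmul, Derivation.leibniz, smul_eq_mul, smul_eq_mul, smul_add]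
      simp only [← Function.iterate_succ_apply' (⇑D)]
      simp only [Nat.succ_eq_add_one]
      rw [show t - v + 1 = t + 1 - v by omega, mul_comm ((⇑D)^[t-v] b)]
    rw [Finset.sum_congr rfl step, Finset.sum_add_distrib]
    rw [Finset.sum_range_succ'
      (fun v => (((t+1).choose v : ℤ)) • ((⇑D)^[v] a * (⇑D)^[t+1-v] b)) (t+1)]
    have e2 : ∀ i ∈ range (t+1),
        (((t+1).choose (i+1) : ℤ)) • ((⇑D)^[i+1] a * (⇑D)^[t+1-(i+1)] b)
          = ((t.choose i : ℤ)) • ((⇑D)^[i+1] a * (⇑D)^[t-i] b)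
            + ((t.choose (i+1) : ℤ)) • ((⇑D)^[i+1] a * (⇑D)^[t-i] b) := by
      intro i hi
      rw [show t+1-(i+1) = t-i by omega, Nat.choose_succ_succ t i]
      push_cast
      rw [add_smul]
    rw [Finset.sum_congr rfl e2, Finset.sum_add_distrib]
    have e3 : ∑ v ∈ range (t+1), ((t.choose v : ℤ)) • ((⇑D)^[v] a * (⇑D)^[t+1-v] b)
        = (∑ i ∈ range (t+1), ((t.choose (i+1) : ℤ)) • ((⇑D)^[i+1] a * (⇑D)^[t-i] b))
          + (((t+1).choose 0 : ℤ)) • ((⇑D)^[0] a * (⇑D)^[t+1-0] b) := by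
      rw [Finset.sum_range_succ'
        (fun v => ((t.choose v : ℤ)) • ((⇑D)^[v] a * (⇑D)^[t+1-v] b)) t]
      congr 1
      · rw [Finset.sum_range_succ]
        simp only [Nat.choose_succ_self, Nat.cast_zero, zero_smul, add_zero]
        refine Finset.sum_congr rfl fun i hi => ?_
        rw [show t+1-(i+1) = t-i by omega]
      · simp
    rw [e3]
    abel

/-! ### The key binomial identity -/

lemma zchoose_key (i j : ℤ) (r s : ℕ) :
    zchoose i r * zchoose (i + j - r) s =
      ∑ u ∈ range (s+1), zchoose i (r + s - u) * zchoose j u * ((r + s - u).choose r : ℤ) := by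
  unfold zchoose
  rw [show i + j - (r:ℤ) = (i - r) + j by ring,
    Ring.add_choose_eq _ (Commute.all _ _),
    Finset.Nat.sum_antidiagonal_eq_sum_range_succ_mk, Finset.mul_sum,
    ← Finset.sum_range_reflect]
  refine Finset.sum_congr rfl fun w hw => ?_
  have hws : w ≤ s := Nat.lt_succ_iff.mp (Finset.mem_range.mp hw)
  simp only
  have h0 : s + 1 - 1 - w = s - w := by omega
  have h2 : s - (s - w) = w := by omega
  rw [h0, h2]
  have h3 : ((r+(s-w)).choose r) • Ring.choose i (r+(s-w)) =
      Ring.choose i r * Ring.choose (i - r) ((r+(s-w)) - r) :=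
    Ring.choose_smul_choose i (n := r+(s-w)) (k := r) (Nat.le_add_right _ _)
  rw [Nat.add_sub_cancel_left] at h3
  have h4 : r + (s - w) = r + s - w := by omega
  rw [h4] at h3
  rw [← mul_assoc, ← h3, nsmul_eq_mul]
  ring

lemma zchoose_zero_right (i : ℤ) : zchoose i 0 = 1 := Ring.choose_zero_right i

lemma zchoose_zero_left (r : ℕ) (h : r ≠ 0) : zchoose 0 r = 0 := by
  obtain ⟨t, rfl⟩ := Nat.exists_eq_succ_of_ne_zero h
  exact Ring.choose_zero_succ ℤ t

/-! ### Finset sum plumbing -/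

lemma sum_trans (F : ℤ → A) {M M' : Finset ℤ} (h : ∀ m, F m ≠ 0 → m ∈ M ∧ m ∈ M') :
    ∑ m ∈ M, F m = ∑ m ∈ M', F m := by
  have h1 : ∑ m ∈ M ∩ M', F m = ∑ m ∈ M, F m :=
    Finset.sum_subset Finset.inter_subset_left (fun x hx hnx => by
      by_contra hne
      exact hnx (Finset.mem_inter.mpr ⟨hx, (h x hne).2⟩))
  have h2 : ∑ m ∈ M ∩ M', F m = ∑ m ∈ M', F m :=
    Finset.sum_subset Finset.inter_subset_right (fun x hx hnx => by
      by_contra hne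
      exact hnx (Finset.mem_inter.mpr ⟨(h x hne).1, hx⟩))
  rw [← h1, h2]

lemma sum_range_trans (F : ℤ → A) {M : Finset ℤ} {R : ℕ} {c : ℤ}
    (h : ∀ m, F m ≠ 0 → m ∈ M ∧ 0 ≤ c - m ∧ c - m < R) :
    ∑ m ∈ M, F m = ∑ v ∈ Finset.range R, F (c - v) := by
  have himg : ∑ v ∈ Finset.range R, F (c - v)
      = ∑ m ∈ (Finset.range R).image (fun v : ℕ => c - (v:ℤ)), F m := by
    rw [Finset.sum_image]
    intro x _ y _ hxy
    simp only at hxy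
    omega
  rw [himg]
  refine sum_trans F fun m hm => ⟨(h m hm).1, ?_⟩
  obtain ⟨_, h1, h2⟩ := h m hm
  refine Finset.mem_image.mpr ⟨(c - m).toNat, Finset.mem_range.mpr (by omega), by omega⟩

/-! ### Expressing `pmul` coefficients as finite sums -/

lemma term_support {f g : ℤ → A} {Nf Ng : ℤ}
    (hf : ∀ i, Nf < i → f i = 0) (hg : ∀ j, Ng < j → g j = 0) (n : ℤ) :
    Function.support (fun p : ℤ × ℤ => if 0 ≤ p.1 + p.2 - n then
        zchoose p.1 (p.1+p.2-n).toNat • (f p.1 * (⇑D)^[(p.1+p.2-n).toNat] (g p.2)) else 0)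
      ⊆ ↑(Finset.Icc (n - Ng) Nf ×ˢ Finset.Icc (n - Nf) Ng) := by
  intro p hp
  simp only [Function.mem_support] at hp
  by_cases h0 : 0 ≤ p.1 + p.2 - n
  · have hf' : ¬ Nf < p.1 := fun h => hp (by rw [if_pos h0, hf _ h, zero_mul, smul_zero])
    have hg' : ¬ Ng < p.2 := fun h => hp (by rw [if_pos h0, hg _ h, itD_zero, mul_zero, smul_zero])
    simp only [Finset.coe_product, Set.mem_prod, Finset.mem_coe, Finset.mem_Icc]
    omega
  · exact absurd (if_neg h0) hp

lemma pmul_eq_sum {f g : ℤ → A} {Nf Ng : ℤ}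
    (hf : ∀ i, Nf < i → f i = 0) (hg : ∀ j, Ng < j → g j = 0) (n : ℤ) {S : Finset (ℤ × ℤ)}
    (hS : Finset.Icc (n - Ng) Nf ×ˢ Finset.Icc (n - Nf) Ng ⊆ S) :
    pmul ⇑D f g n = ∑ p ∈ S, (if 0 ≤ p.1 + p.2 - n then
        zchoose p.1 (p.1+p.2-n).toNat • (f p.1 * (⇑D)^[(p.1+p.2-n).toNat] (g p.2)) else 0) :=
  finsum_eq_sum_of_support_subset _
    ((term_support D hf hg n).trans (by exact_mod_cast Finset.coe_subset.mpr hS))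

lemma pmul_bound {f g : ℤ → A} {Nf Ng : ℤ}
    (hf : ∀ i, Nf < i → f i = 0) (hg : ∀ j, Ng < j → g j = 0) :
    ∀ m, Nf + Ng < m → pmul ⇑D f g m = 0 := by
  intro m hm
  have hemp : Finset.Icc (m - Ng) Nf = (∅ : Finset ℤ) := Finset.Icc_eq_empty (by omega)
  rw [pmul_eq_sum D hf hg m (Finset.Subset.refl _), hemp, Finset.empty_product,
    Finset.sum_empty]

end TwoBKP
namespace TwoBKP

open Finset

variable {A : Type*} [CommRing A] (D : Derivation ℤ A A)

/-- The basic triple product appearing in associativity. -/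
noncomputable def Xt (D : A → A) (f g h : ℤ → A) (i j k : ℤ) (r s : ℕ) : A :=
  f i * (D^[r] (g j) * D^[s] (h k))

/-- The flattened summand of `(f·g)·h`. -/
noncomputable def Qt (D : A → A) (f g h : ℤ → A) (n m k i j : ℤ) : A :=
  if 0 ≤ m + k - n ∧ 0 ≤ i + j - m then
    (zchoose i (i+j-m).toNat * zchoose m (m+k-n).toNat) •
      Xt D f g h i j k (i+j-m).toNat (m+k-n).toNat
  else 0

/-- The flattened summand of `f·(g·h)` (after Leibniz). -/
noncomputable def Gt (D : A → A) (f g h : ℤ → A) (n : ℤ) (R : ℕ) (i m' j k : ℤ) : A :=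
  if 0 ≤ i + m' - n ∧ 0 ≤ j + k - m' then
    ∑ v ∈ Finset.range R,
      (zchoose i (i+m'-n).toNat * (zchoose j (j+k-m').toNat * (((i+m'-n).toNat.choose v : ℤ)))) •
        Xt D f g h i j k v (((i+m'-n).toNat - v) + (j+k-m').toNat)
  else 0

lemma assoc_lhs {f g h : ℤ → A} {Nf Ng Nh : ℤ}
    (hf : ∀ i, Nf < i → f i = 0) (hg : ∀ j, Ng < j → g j = 0) (hh : ∀ k, Nh < k → h k = 0)
    (n : ℤ) :
    pmul ⇑D (pmul ⇑D f g) h n =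
      ∑ i ∈ Icc (n - Ng - Nh) Nf, ∑ j ∈ Icc (n - Nf - Nh) Ng, ∑ k ∈ Icc (n - Nf - Ng) Nh,
        ∑ v ∈ range ((Nf+Ng+Nh-n).toNat + 1), Qt ⇑D f g h n (i+j-v) k i j := by
  rw [pmul_eq_sum D (pmul_bound D hf hg) hh n
    (S := Icc (n - Nh) (Nf+Ng) ×ˢ Icc (n - Nf - Ng) Nh)
    (by intro p hp; simp only [Finset.mem_product, Finset.mem_Icc] at hp ⊢; omega),
    Finset.sum_product]
  have step2 : ∀ m ∈ Icc (n - Nh) (Nf+Ng), ∀ k ∈ Icc (n - Nf - Ng) Nh,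
      (if 0 ≤ m + k - n then
        zchoose m (m+k-n).toNat • (pmul ⇑D f g m * (⇑D)^[(m+k-n).toNat] (h k)) else 0)
      = ∑ i ∈ Icc (n - Ng - Nh) Nf, ∑ j ∈ Icc (n - Nf - Nh) Ng, Qt ⇑D f g h n m k i j := by
    intro m hm k hk
    rw [Finset.mem_Icc] at hm hk
    by_cases hc : 0 ≤ m + k - n
    · rw [if_pos hc, pmul_eq_sum D hf hg m
        (S := Icc (n - Ng - Nh) Nf ×ˢ Icc (n - Nf - Nh) Ng)
        (by intro p hp; simp only [Finset.mem_product, Finset.mem_Icc] at hp ⊢; omega),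
        Finset.sum_product, Finset.sum_mul, Finset.smul_sum]
      refine Finset.sum_congr rfl fun i hi => ?_
      rw [Finset.sum_mul, Finset.smul_sum]
      refine Finset.sum_congr rfl fun j hj => ?_
      show zchoose m (m+k-n).toNat •
          ((if 0 ≤ i + j - m then
              zchoose i (i+j-m).toNat • (f i * (⇑D)^[(i+j-m).toNat] (g j)) else 0)
            * (⇑D)^[(m+k-n).toNat] (h k))
        = Qt ⇑D f g h n m k i j
      by_cases hc2 : 0 ≤ i + j - m
      · rw [if_pos hc2, Qt, if_pos ⟨hc, hc2⟩, Xt,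
          smul_mul_assoc, smul_smul, mul_assoc, mul_comm (zchoose m (m+k-n).toNat)]
      · rw [if_neg hc2, zero_mul, smul_zero, Qt, if_neg (fun hand => hc2 hand.2)]
    · rw [if_neg hc]
      refine (Finset.sum_eq_zero fun i _ => Finset.sum_eq_zero fun j _ => ?_).symm
      rw [Qt, if_neg (fun hand => hc hand.1)]
  rw [Finset.sum_congr rfl (fun m hm => Finset.sum_congr rfl (fun k hk => step2 m hm k hk))]
  -- now reorder sums
  have sw1 : ∑ m ∈ Icc (n - Nh) (Nf+Ng), ∑ k ∈ Icc (n - Nf - Ng) Nh,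
      ∑ i ∈ Icc (n - Ng - Nh) Nf, ∑ j ∈ Icc (n - Nf - Nh) Ng, Qt ⇑D f g h n m k i j
      = ∑ i ∈ Icc (n - Ng - Nh) Nf, ∑ j ∈ Icc (n - Nf - Nh) Ng,
        ∑ k ∈ Icc (n - Nf - Ng) Nh, ∑ m ∈ Icc (n - Nh) (Nf+Ng), Qt ⇑D f g h n m k i j := by
    rw [Finset.sum_congr rfl fun m _ => Finset.sum_comm]
    rw [Finset.sum_comm]
    rw [Finset.sum_congr rfl fun i _ => Finset.sum_congr rfl fun m _ => Finset.sum_comm]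
    rw [Finset.sum_congr rfl fun i _ => Finset.sum_comm]
    exact Finset.sum_congr rfl fun i _ => Finset.sum_congr rfl fun j _ => Finset.sum_comm
  rw [sw1]
  refine Finset.sum_congr rfl fun i hi => Finset.sum_congr rfl fun j hj =>
    Finset.sum_congr rfl fun k hk => ?_
  rw [Finset.mem_Icc] at hi hj hk
  refine sum_range_trans _ (fun m hQ => ?_)
  rw [Qt] at hQ
  by_cases hcond : 0 ≤ m + k - n ∧ 0 ≤ i + j - m
  · obtain ⟨h1, h2⟩ := hcond
    refine ⟨Finset.mem_Icc.mpr ⟨by omega, by omega⟩, by omega, by omega⟩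
  · exact absurd (if_neg hcond) hQ

lemma assoc_rhs {f g h : ℤ → A} {Nf Ng Nh : ℤ}
    (hf : ∀ i, Nf < i → f i = 0) (hg : ∀ j, Ng < j → g j = 0) (hh : ∀ k, Nh < k → h k = 0)
    (n : ℤ) :
    pmul ⇑D f (pmul ⇑D g h) n =
      ∑ i ∈ Icc (n - Ng - Nh) Nf, ∑ j ∈ Icc (n - Nf - Nh) Ng, ∑ k ∈ Icc (n - Nf - Ng) Nh,
        ∑ u ∈ range ((Nf+Ng+Nh-n).toNat + 1),
          Gt ⇑D f g h n ((Nf+Ng+Nh-n).toNat + 1) i (j+k-u) j k := by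
  set R : ℕ := (Nf+Ng+Nh-n).toNat + 1 with hR
  rw [pmul_eq_sum D hf (pmul_bound D hg hh) n
    (S := Icc (n - Ng - Nh) Nf ×ˢ Icc (n - Nf) (Ng+Nh))
    (by intro p hp; simp only [Finset.mem_product, Finset.mem_Icc] at hp ⊢; omega),
    Finset.sum_product]
  have step2 : ∀ i ∈ Icc (n - Ng - Nh) Nf, ∀ m' ∈ Icc (n - Nf) (Ng+Nh),
      (if 0 ≤ i + m' - n then
        zchoose i (i+m'-n).toNat • (f i * (⇑D)^[(i+m'-n).toNat] (pmul ⇑D g h m')) else 0)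
      = ∑ j ∈ Icc (n - Nf - Nh) Ng, ∑ k ∈ Icc (n - Nf - Ng) Nh, Gt ⇑D f g h n R i m' j k := by
    intro i hi m' hm'
    rw [Finset.mem_Icc] at hi hm'
    by_cases hc : 0 ≤ i + m' - n
    · rw [if_pos hc, pmul_eq_sum D hg hh m'
        (S := Icc (n - Nf - Nh) Ng ×ˢ Icc (n - Nf - Ng) Nh)
        (by intro p hp; simp only [Finset.mem_product, Finset.mem_Icc] at hp ⊢; omega),
        Finset.sum_product, itD_sum, Finset.mul_sum, Finset.smul_sum]
      refine Finset.sum_congr rfl fun j hj => ?_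
      rw [itD_sum, Finset.mul_sum, Finset.smul_sum]
      refine Finset.sum_congr rfl fun k hk => ?_
      rw [Finset.mem_Icc] at hj hk
      show zchoose i (i+m'-n).toNat •
          (f i * (⇑D)^[(i+m'-n).toNat]
            (if 0 ≤ j + k - m' then
              zchoose j (j+k-m').toNat • (g j * (⇑D)^[(j+k-m').toNat] (h k)) else 0))
        = Gt ⇑D f g h n R i m' j k
      by_cases hc2 : 0 ≤ j + k - m'
      · rw [if_pos hc2, itD_zsmul, mul_smul_comm, smul_smul,
          itD_leibniz D ((i+m'-n).toNat) (g j) ((⇑D)^[(j+k-m').toNat] (h k))]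
        simp only [← Function.iterate_add_apply (⇑D)]
        rw [Finset.mul_sum, Finset.smul_sum]
        have hterm : ∀ v ∈ range ((i+m'-n).toNat + 1),
            (zchoose i (i+m'-n).toNat * zchoose j (j+k-m').toNat) •
              (f i * ((((i+m'-n).toNat.choose v : ℤ)) •
                ((⇑D)^[v] (g j) * (⇑D)^[((i+m'-n).toNat - v) + (j+k-m').toNat] (h k))))
            = (zchoose i (i+m'-n).toNat * (zchoose j (j+k-m').toNat *
                (((i+m'-n).toNat.choose v : ℤ)))) •
                Xt ⇑D f g h i j k v (((i+m'-n).toNat - v) + (j+k-m').toNat) := by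
          intro v hv
          rw [mul_smul_comm, smul_smul, Xt, mul_assoc]
        rw [Finset.sum_congr rfl hterm]
        have hub : (i+m'-n).toNat + 1 ≤ R := by rw [hR]; omega
        rw [Finset.sum_subset (Finset.range_subset_range.mpr hub) (fun v hv hnv => by
          rw [Nat.choose_eq_zero_of_lt (by
            simp only [Finset.mem_range] at hv hnv; omega), Nat.cast_zero, mul_zero,
            mul_zero, zero_smul])]
        rw [Gt, if_pos ⟨hc, hc2⟩]
      · rw [if_neg hc2, itD_zero, mul_zero, smul_zero, Gt, if_neg (fun hand => hc2 hand.2)]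
    · rw [if_neg hc]
      refine (Finset.sum_eq_zero fun j _ => Finset.sum_eq_zero fun k _ => ?_).symm
      rw [Gt, if_neg (fun hand => hc hand.1)]
  rw [Finset.sum_congr rfl (fun i hi => Finset.sum_congr rfl (fun m' hm' => step2 i hi m' hm'))]
  refine Finset.sum_congr rfl fun i hi => ?_
  rw [Finset.sum_comm]
  rw [Finset.sum_congr rfl fun j _ => Finset.sum_comm]
  refine Finset.sum_congr rfl fun j hj => Finset.sum_congr rfl fun k hk => ?_
  rw [Finset.mem_Icc] at hi hj hk
  refine sum_range_trans _ (fun m' hG => ?_)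
  rw [Gt] at hG
  by_cases hcond : 0 ≤ i + m' - n ∧ 0 ≤ j + k - m'
  · obtain ⟨h1, h2⟩ := hcond
    refine ⟨Finset.mem_Icc.mpr ⟨by omega, by omega⟩, by omega, by omega⟩
  · exact absurd (if_neg hcond) hG

end TwoBKP
namespace TwoBKP

open Finset

variable {A : Type*} [CommRing A] (D : Derivation ℤ A A)

lemma assoc_core {f g h : ℤ → A} {Nf Ng Nh : ℤ} (n : ℤ) {i j k : ℤ}
    (hi : n - Ng - Nh ≤ i ∧ i ≤ Nf) (hj : n - Nf - Nh ≤ j ∧ j ≤ Ng)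
    (hk : n - Nf - Ng ≤ k ∧ k ≤ Nh) :
    ∑ v ∈ range ((Nf+Ng+Nh-n).toNat + 1), Qt ⇑D f g h n (i+j-v) k i j
      = ∑ u ∈ range ((Nf+Ng+Nh-n).toNat + 1),
          Gt ⇑D f g h n ((Nf+Ng+Nh-n).toNat + 1) i (j+k-u) j k := by
  set R : ℕ := (Nf+Ng+Nh-n).toNat + 1 with hR
  -- rewrite the RHS summand in a uniform shape
  have haveG : ∀ u ∈ range R, Gt ⇑D f g h n R i (j+k-u) j k
      = ∑ v ∈ range R,
          (if 0 ≤ i+j+k-n-u then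
            (zchoose i (i+j+k-n-u).toNat * (zchoose j u *
              (((i+j+k-n-u).toNat.choose v : ℤ)))) •
              Xt ⇑D f g h i j k v (((i+j+k-n-u).toNat - v) + u)
          else 0) := by
    intro u hu
    rw [Gt]
    by_cases hcu : 0 ≤ i+j+k-n-u
    · rw [if_pos ⟨by omega, by omega⟩]
      refine Finset.sum_congr rfl fun v hv => ?_
      rw [if_pos hcu]
      simp only [show i+(j+k-(u:ℤ))-n = i+j+k-n-u from by ring,
        show j+k-(j+k-(u:ℤ)) = (u:ℤ) from by ring, Int.toNat_natCast]
    · rw [if_neg (fun hand => hcu (by omega))]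
      exact (Finset.sum_eq_zero fun v _ => if_neg hcu).symm
  rw [Finset.sum_congr rfl haveG, Finset.sum_comm]
  refine Finset.sum_congr rfl fun v hv => ?_
  rw [Finset.mem_range] at hv
  by_cases hvle : 0 ≤ i + j - (v:ℤ) + k - n
  · -- main case
    have hEv : (i + j - (v:ℤ) + k - n).toNat = (i+j+k-n).toNat - v := by omega
    have hvE : v ≤ (i+j+k-n).toNat := by omega
    rw [Qt, if_pos ⟨hvle, (by omega : (0:ℤ) ≤ i + j - (i + j - (v:ℤ)))⟩, hEv,
      show (i + j - (i + j - (v:ℤ))).toNat = v from by omega]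
    have hterm : ∀ u ∈ range R,
        (if 0 ≤ i+j+k-n-u then
          (zchoose i (i+j+k-n-u).toNat * (zchoose j u *
            (((i+j+k-n-u).toNat.choose v : ℤ)))) •
            Xt ⇑D f g h i j k v (((i+j+k-n-u).toNat - v) + u)
        else 0)
        = (if (u:ℤ) ≤ i+j+k-n then
            zchoose i ((i+j+k-n).toNat - u) * (zchoose j u *
              ((((i+j+k-n).toNat - u).choose v : ℤ)))
          else 0) • Xt ⇑D f g h i j k v ((i+j+k-n).toNat - v) := by
      intro u hu
      by_cases hcu : 0 ≤ i+j+k-n-u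
      · rw [if_pos hcu, if_pos (by omega),
          show (i+j+k-n-(u:ℤ)).toNat = (i+j+k-n).toNat - u from by omega]
        by_cases hvu : v ≤ (i+j+k-n).toNat - u
        · rw [show (i+j+k-n).toNat - u - v + u = (i+j+k-n).toNat - v from by omega]
        · rw [Nat.choose_eq_zero_of_lt (by omega), Nat.cast_zero, mul_zero, mul_zero,
            zero_smul, zero_smul]
      · rw [if_neg hcu, if_neg (by omega), zero_smul]
    rw [Finset.sum_congr rfl hterm, ← Finset.sum_smul]
    -- scalar identity
    congr 1
    have htrim : ∑ u ∈ range R,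
        (if (u:ℤ) ≤ i+j+k-n then
          zchoose i ((i+j+k-n).toNat - u) * (zchoose j u *
            ((((i+j+k-n).toNat - u).choose v : ℤ)))
        else 0)
        = ∑ u ∈ range ((i+j+k-n).toNat - v + 1),
            zchoose i ((i+j+k-n).toNat - u) * (zchoose j u *
              ((((i+j+k-n).toNat - u).choose v : ℤ))) := by
      have hsub : range ((i+j+k-n).toNat - v + 1) ⊆ range R :=
        Finset.range_subset_range.mpr (by omega)
      have hvan : ∀ u ∈ range R, u ∉ range ((i+j+k-n).toNat - v + 1) →
          (if (u:ℤ) ≤ i+j+k-n then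
            zchoose i ((i+j+k-n).toNat - u) * (zchoose j u *
              ((((i+j+k-n).toNat - u).choose v : ℤ)))
          else 0) = 0 := by
        intro u hu hnu
        rw [Finset.mem_range] at hu hnu
        by_cases hue : (u:ℤ) ≤ i+j+k-n
        · rw [if_pos hue, Nat.choose_eq_zero_of_lt (by omega), Nat.cast_zero, mul_zero, mul_zero]
        · exact if_neg hue
      rw [← Finset.sum_subset hsub hvan]
      refine Finset.sum_congr rfl fun u hu => ?_
      rw [Finset.mem_range] at hu
      rw [if_pos (by omega)]
    rw [htrim, zchoose_key i j v ((i+j+k-n).toNat - v)]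
    rw [show v + ((i+j+k-n).toNat - v) = (i+j+k-n).toNat from by omega]
    refine Finset.sum_congr rfl fun u hu => ?_
    rw [mul_assoc]
  · -- vanishing case
    rw [Qt, if_neg (fun hand => hvle hand.1)]
    refine (Finset.sum_eq_zero fun u hu => ?_).symm
    by_cases hcu : 0 ≤ i+j+k-n-u
    · rw [if_pos hcu, Nat.choose_eq_zero_of_lt (by omega), Nat.cast_zero, mul_zero, mul_zero,
        zero_smul]
    · exact if_neg hcu

end TwoBKP
/-!
STATEMENT 2.  `𝒟⁻` with componentwise addition and the multiplication
`(f D^i)·(g D^j) = Σ_{r≥0} binom(i,r) f D^r(g) D^{i+j−r}` is an associative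
unital ring, and the element `D` is invertible with inverse `D⁻¹`.
-/

open TwoBKP in
open TwoBKP in
theorem pdo_first_type_is_ring {A : Type*} [CommRing A] (D : Derivation ℤ A A) :
    -- multiplication is closed on 𝒟⁻
    (∀ f g : ℤ → A, IsPDO f → IsPDO g → IsPDO (pmul ⇑D f g)) ∧
    -- multiplication is associative
    (∀ f g h : ℤ → A, IsPDO f → IsPDO g → IsPDO h →
        pmul ⇑D (pmul ⇑D f g) h = pmul ⇑D f (pmul ⇑D g h)) ∧
    -- 1 = 1·D⁰ is a two-sided unit
    (∀ f : ℤ → A, IsPDO f → pmul ⇑D pone f = f ∧ pmul ⇑D f pone = f) ∧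
    -- multiplication distributes over (componentwise) addition
    (∀ f g h : ℤ → A, IsPDO f → IsPDO g → IsPDO h →
        pmul ⇑D f (g + h) = pmul ⇑D f g + pmul ⇑D f h ∧
        pmul ⇑D (f + g) h = pmul ⇑D f h + pmul ⇑D g h) ∧
    -- D = 1·D¹ is invertible with inverse 1·D⁻¹
    (pmul ⇑D (pD 1) (pD (-1)) = (pone : ℤ → A) ∧
        pmul ⇑D (pD (-1)) (pD 1) = (pone : ℤ → A)) := by
  refine ⟨?_, ?_, ?_, ?_, ?_, ?_⟩
  · -- closure
    rintro f g ⟨Nf, hf⟩ ⟨Ng, hg⟩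
    exact ⟨Nf + Ng, pmul_bound D hf hg⟩
  · -- associativity
    rintro f g h ⟨Nf, hf⟩ ⟨Ng, hg⟩ ⟨Nh, hh⟩
    funext n
    rw [assoc_lhs D hf hg hh n, assoc_rhs D hf hg hh n]
    refine Finset.sum_congr rfl fun i hi => Finset.sum_congr rfl fun j hj =>
      Finset.sum_congr rfl fun k hk => ?_
    rw [Finset.mem_Icc] at hi hj hk
    exact assoc_core D n hi hj hk
  · -- unit laws
    rintro f ⟨Nf, hf⟩
    constructor
    · funext n
      have hsupp : Function.support (fun p : ℤ × ℤ => if 0 ≤ p.1 + p.2 - n then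
            zchoose p.1 (p.1+p.2-n).toNat • (pone p.1 * (⇑D)^[(p.1+p.2-n).toNat] (f p.2)) else 0)
          ⊆ ↑({((0:ℤ), n)} : Finset (ℤ × ℤ)) := by
        intro p hp
        simp only [Function.mem_support] at hp
        by_cases h0 : 0 ≤ p.1 + p.2 - n
        · have h1 : p.1 = 0 := by
            by_contra hne
            refine hp ?_
            rw [if_pos h0, show pone p.1 = (0:A) from if_neg hne, zero_mul, smul_zero]
          have h2 : p.2 = n := by
            by_contra hne
            refine hp ?_
            rw [if_pos h0, h1, zchoose_zero_left _ (by omega), zero_smul]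
          simp only [Finset.coe_singleton, Set.mem_singleton_iff]
          exact Prod.ext h1 h2
        · exact absurd (if_neg h0) hp
      have hval := finsum_eq_sum_of_support_subset _ hsupp
      rw [Finset.sum_singleton] at hval
      calc pmul ⇑D pone f n
          = (if 0 ≤ (0:ℤ) + n - n then
              zchoose 0 ((0:ℤ)+n-n).toNat • (pone 0 * (⇑D)^[((0:ℤ)+n-n).toNat] (f n)) else 0) :=
            hval
        _ = f n := by
            rw [if_pos (by omega), show ((0:ℤ)+n-n).toNat = 0 by omega, zchoose_zero_right,
              one_smul, Function.iterate_zero_apply, show pone 0 = (1:A) from if_pos rfl, one_mul]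
    · funext n
      have hsupp : Function.support (fun p : ℤ × ℤ => if 0 ≤ p.1 + p.2 - n then
            zchoose p.1 (p.1+p.2-n).toNat • (f p.1 * (⇑D)^[(p.1+p.2-n).toNat] (pone p.2)) else 0)
          ⊆ ↑({(n, (0:ℤ))} : Finset (ℤ × ℤ)) := by
        intro p hp
        simp only [Function.mem_support] at hp
        by_cases h0 : 0 ≤ p.1 + p.2 - n
        · have h1 : p.2 = 0 := by
            by_contra hne
            refine hp ?_
            rw [if_pos h0, show pone p.2 = (0:A) from if_neg hne, itD_zero, mul_zero, smul_zero]
          have h2 : p.1 = n := by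
            by_contra hne
            refine hp ?_
            rw [if_pos h0, h1, show pone 0 = (1:A) from if_pos rfl,
              itD_one D _ (by omega), mul_zero, smul_zero]
          simp only [Finset.coe_singleton, Set.mem_singleton_iff]
          exact Prod.ext h2 h1
        · exact absurd (if_neg h0) hp
      have hval := finsum_eq_sum_of_support_subset _ hsupp
      rw [Finset.sum_singleton] at hval
      calc pmul ⇑D f pone n
          = (if 0 ≤ n + (0:ℤ) - n then
              zchoose n (n+(0:ℤ)-n).toNat • (f n * (⇑D)^[(n+(0:ℤ)-n).toNat] (pone 0)) else 0) :=
            hval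
        _ = f n := by
            rw [if_pos (by omega), show (n+(0:ℤ)-n).toNat = 0 by omega, zchoose_zero_right,
              one_smul, Function.iterate_zero_apply, show pone 0 = (1:A) from if_pos rfl, mul_one]
  · -- distributivity
    rintro f g h ⟨Nf, hf⟩ ⟨Ng, hg⟩ ⟨Nh, hh⟩
    constructor
    · funext n
      have key : ∀ p : ℤ × ℤ, (if 0 ≤ p.1 + p.2 - n then
            zchoose p.1 (p.1+p.2-n).toNat • (f p.1 * (⇑D)^[(p.1+p.2-n).toNat] ((g + h) p.2)) else 0)
          = (if 0 ≤ p.1 + p.2 - n then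
            zchoose p.1 (p.1+p.2-n).toNat • (f p.1 * (⇑D)^[(p.1+p.2-n).toNat] (g p.2)) else 0)
          + (if 0 ≤ p.1 + p.2 - n then
            zchoose p.1 (p.1+p.2-n).toNat • (f p.1 * (⇑D)^[(p.1+p.2-n).toNat] (h p.2)) else 0) := by
        intro p
        by_cases h0 : 0 ≤ p.1 + p.2 - n
        · simp only [if_pos h0, Pi.add_apply, itD_add, mul_add, smul_add]
        · simp only [if_neg h0, add_zero]
      calc pmul ⇑D f (g + h) n
          = ∑ᶠ p : ℤ × ℤ, ((if 0 ≤ p.1 + p.2 - n then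
              zchoose p.1 (p.1+p.2-n).toNat • (f p.1 * (⇑D)^[(p.1+p.2-n).toNat] (g p.2)) else 0)
            + (if 0 ≤ p.1 + p.2 - n then
              zchoose p.1 (p.1+p.2-n).toNat • (f p.1 * (⇑D)^[(p.1+p.2-n).toNat] (h p.2)) else 0)) :=
            finsum_congr key
        _ = pmul ⇑D f g n + pmul ⇑D f h n :=
            finsum_add_distrib
              (Set.Finite.subset (Finset.finite_toSet _) (term_support D hf hg n))
              (Set.Finite.subset (Finset.finite_toSet _) (term_support D hf hh n))
    · funext n
      have key : ∀ p : ℤ × ℤ, (if 0 ≤ p.1 + p.2 - n then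
            zchoose p.1 (p.1+p.2-n).toNat • ((f + g) p.1 * (⇑D)^[(p.1+p.2-n).toNat] (h p.2)) else 0)
          = (if 0 ≤ p.1 + p.2 - n then
            zchoose p.1 (p.1+p.2-n).toNat • (f p.1 * (⇑D)^[(p.1+p.2-n).toNat] (h p.2)) else 0)
          + (if 0 ≤ p.1 + p.2 - n then
            zchoose p.1 (p.1+p.2-n).toNat • (g p.1 * (⇑D)^[(p.1+p.2-n).toNat] (h p.2)) else 0) := by
        intro p
        by_cases h0 : 0 ≤ p.1 + p.2 - n
        · simp only [if_pos h0, Pi.add_apply, add_mul, smul_add]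
        · simp only [if_neg h0, add_zero]
      calc pmul ⇑D (f + g) h n
          = ∑ᶠ p : ℤ × ℤ, ((if 0 ≤ p.1 + p.2 - n then
              zchoose p.1 (p.1+p.2-n).toNat • (f p.1 * (⇑D)^[(p.1+p.2-n).toNat] (h p.2)) else 0)
            + (if 0 ≤ p.1 + p.2 - n then
              zchoose p.1 (p.1+p.2-n).toNat • (g p.1 * (⇑D)^[(p.1+p.2-n).toNat] (h p.2)) else 0)) :=
            finsum_congr key
        _ = pmul ⇑D f h n + pmul ⇑D g h n :=
            finsum_add_distrib
              (Set.Finite.subset (Finset.finite_toSet _) (term_support D hf hh n))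
              (Set.Finite.subset (Finset.finite_toSet _) (term_support D hg hh n))
  · -- D * D⁻¹ = 1
    funext n
    have hsupp : Function.support (fun p : ℤ × ℤ => if 0 ≤ p.1 + p.2 - n then
          zchoose p.1 (p.1+p.2-n).toNat • (pD 1 p.1 * (⇑D)^[(p.1+p.2-n).toNat] (pD (-1) p.2)) else 0)
        ⊆ ↑({((1:ℤ), (-1:ℤ))} : Finset (ℤ × ℤ)) := by
      intro p hp
      simp only [Function.mem_support] at hp
      by_cases h0 : 0 ≤ p.1 + p.2 - n
      · have h1 : p.1 = 1 := by
          by_contra hne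
          refine hp ?_
          rw [if_pos h0, show pD 1 p.1 = (0:A) from if_neg hne, zero_mul, smul_zero]
        have h2 : p.2 = -1 := by
          by_contra hne
          refine hp ?_
          rw [if_pos h0, show pD (-1) p.2 = (0:A) from if_neg hne, itD_zero, mul_zero, smul_zero]
        simp only [Finset.coe_singleton, Set.mem_singleton_iff]
        exact Prod.ext h1 h2
      · exact absurd (if_neg h0) hp
    have hval := finsum_eq_sum_of_support_subset _ hsupp
    rw [Finset.sum_singleton] at hval
    have hval' : pmul ⇑D (pD 1) (pD (-1)) n
        = (if 0 ≤ (1:ℤ) + (-1) - n then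
            zchoose 1 ((1:ℤ)+(-1)-n).toNat • ((pD 1 (1:ℤ) : A) * (⇑D)^[((1:ℤ)+(-1)-n).toNat] (pD (-1) (-1))) else 0) :=
      hval
    rw [hval']
    rcases lt_trichotomy n 0 with hn | hn | hn
    · rw [if_pos (by omega), show (pD (-1) (-1) : A) = 1 from if_pos rfl,
        itD_one D _ (by omega), mul_zero, smul_zero, show pone n = (0:A) from if_neg (by omega)]
    · subst hn
      rw [if_pos (by omega), show ((1:ℤ)+(-1)-0).toNat = 0 by omega, zchoose_zero_right, one_smul,
        Function.iterate_zero_apply, show (pD (-1) (-1) : A) = 1 from if_pos rfl,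
        show (pD 1 (1:ℤ) : A) = 1 from if_pos rfl, one_mul,
        show pone (0:ℤ) = (1:A) from if_pos rfl]
    · rw [if_neg (by omega), show pone n = (0:A) from if_neg (by omega)]
  · -- D⁻¹ * D = 1
    funext n
    have hsupp : Function.support (fun p : ℤ × ℤ => if 0 ≤ p.1 + p.2 - n then
          zchoose p.1 (p.1+p.2-n).toNat • (pD (-1) p.1 * (⇑D)^[(p.1+p.2-n).toNat] (pD 1 p.2)) else 0)
        ⊆ ↑({((-1:ℤ), (1:ℤ))} : Finset (ℤ × ℤ)) := by
      intro p hp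
      simp only [Function.mem_support] at hp
      by_cases h0 : 0 ≤ p.1 + p.2 - n
      · have h1 : p.1 = -1 := by
          by_contra hne
          refine hp ?_
          rw [if_pos h0, show pD (-1) p.1 = (0:A) from if_neg hne, zero_mul, smul_zero]
        have h2 : p.2 = 1 := by
          by_contra hne
          refine hp ?_
          rw [if_pos h0, show pD 1 p.2 = (0:A) from if_neg hne, itD_zero, mul_zero, smul_zero]
        simp only [Finset.coe_singleton, Set.mem_singleton_iff]
        exact Prod.ext h1 h2
      · exact absurd (if_neg h0) hp
    have hval := finsum_eq_sum_of_support_subset _ hsupp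
    rw [Finset.sum_singleton] at hval
    have hval' : pmul ⇑D (pD (-1)) (pD 1) n
        = (if 0 ≤ (-1:ℤ) + 1 - n then
            zchoose (-1) ((-1:ℤ)+1-n).toNat • ((pD (-1) (-1:ℤ) : A) * (⇑D)^[((-1:ℤ)+1-n).toNat] (pD 1 1)) else 0) :=
      hval
    rw [hval']
    rcases lt_trichotomy n 0 with hn | hn | hn
    · rw [if_pos (by omega), show (pD 1 (1:ℤ) : A) = 1 from if_pos rfl,
        itD_one D _ (by omega), mul_zero, smul_zero, show pone n = (0:A) from if_neg (by omega)]
    · subst hn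
      rw [if_pos (by omega), show ((-1:ℤ)+1-0).toNat = 0 by omega, zchoose_zero_right, one_smul,
        Function.iterate_zero_apply, show (pD (-1) (-1:ℤ) : A) = 1 from if_pos rfl,
        show (pD 1 (1:ℤ) : A) = 1 from if_pos rfl, one_mul,
        show pone (0:ℤ) = (1:A) from if_pos rfl]
    · rw [if_neg (by omega), show pone n = (0:A) from if_neg (by omega)]
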